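/- arXiv:1109.6302 — 4 statements merged into one kernel-verified Lean document; each statement's English description precedes it below -/
import Mathlib

section
/- For the derivation ∂ = x^n ∂_y + p(y) ∂_z of ℂ[x,y,z] (n ≥ 1, p ∈ ℂ[y] nonconstant) with P an integral of p, the kernel of ∂ equals the ℂ-subalgebra generated by x and t = -x^n z + P(y), i.e. ker ∂ = ℂ[x, -x^n z + P(y)]. -/
open MvPolynomial

namespace Stmt2Aux


variable {σ : Type*} {R : Type*} [CommSemiring R]

lemma pderiv_comm (i j : σ) (f : MvPolynomial σ R) :
    pderiv i (pderiv j f) = pderiv j (pderiv i f) := by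
  induction f using MvPolynomial.induction_on with
  | C a => simp [pderiv_C]
  | add f g hf hg => simp only [map_add, hf, hg]
  | mul_X q k ih =>
      have hx : ∀ a b : σ, pderiv a (pderiv b (X k : MvPolynomial σ R)) = 0 := by
        intro a b
        rcases eq_or_ne k b with rfl | h
        · rw [pderiv_X_self]; exact pderiv_one
        · rw [pderiv_X_of_ne h]; exact map_zero _
      simp only [pderiv_mul, map_add, ih, hx]
      ring

lemma coeff_pderiv {R : Type*} [CommRing R] (i : σ) (f : MvPolynomial σ R) (d : σ →₀ ℕ) :
    coeff d (pderiv i f) = ((d i : R) + 1) * coeff (d + Finsupp.single i 1) f := by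
  classical
  induction f using MvPolynomial.induction_on' with
  | add f g hf hg => simp only [map_add, coeff_add, hf, hg, mul_add]
  | monomial s a =>
      rw [pderiv_monomial, coeff_monomial, coeff_monomial]
      by_cases hs : s = d + Finsupp.single i 1
      · have hd : s - Finsupp.single i 1 = d := by
          rw [hs]; ext a; simp
        have hsi : (s i : R) = (d i : R) + 1 := by
          rw [hs]; push_cast [Finsupp.add_apply, Finsupp.single_eq_same]; ring
        rw [if_pos hs, if_pos hd, hsi]; ring
      · rw [if_neg hs]
        by_cases h0 : s i = 0
        · rw [h0]; push_cast; rw [mul_zero, mul_zero]; split <;> simp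
        · have : s - Finsupp.single i 1 ≠ d := by
            intro hd
            apply hs
            rw [← hd, tsub_add_cancel_of_le]
            exact Finsupp.single_le_iff.2 (Nat.one_le_iff_ne_zero.2 h0)
          rw [if_neg this, mul_zero]

lemma coeff_eq_zero_of_pderiv_eq_zero {R : Type*} [CommRing R] [CharZero R] [NoZeroDivisors R] (i : σ)
    (f : MvPolynomial σ R) (h : pderiv i f = 0) (m : σ →₀ ℕ) (hm : m i ≠ 0) :
    coeff m f = 0 := by
  classical
  have hle : Finsupp.single i 1 ≤ m := Finsupp.single_le_iff.2 (Nat.one_le_iff_ne_zero.2 hm)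
  have := coeff_pderiv i f (m - Finsupp.single i 1)
  rw [h, coeff_zero, tsub_add_cancel_of_le hle] at this
  have hne := Nat.cast_add_one_ne_zero (R := R) ((m - Finsupp.single i 1 : σ →₀ ℕ) i)
  exact (mul_eq_zero.1 this.symm).resolve_left hne

lemma exists_iterate_pderiv_eq_zero (i : σ) (f : MvPolynomial σ R) :
    ∃ k, (fun g : MvPolynomial σ R => pderiv i g)^[k] f = 0 := by
  set d : MvPolynomial σ R → MvPolynomial σ R := fun g => pderiv i g with hd
  have hzero : ∀ k, d^[k] 0 = 0 := fun k =>
    Function.iterate_fixed (by simp [hd]) k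
  have hadd : ∀ (k) (f g : MvPolynomial σ R), d^[k] (f + g) = d^[k] f + d^[k] g := by
    intro k
    induction k with
    | zero => intro f g; rfl
    | succ k ih =>
        intro f g
        rw [Function.iterate_succ_apply, Function.iterate_succ_apply,
          Function.iterate_succ_apply]
        have : d (f + g) = d f + d g := by simp [hd]
        rw [this, ih]
  have hmono : ∀ (k l) (f : MvPolynomial σ R), d^[k] f = 0 → d^[l + k] f = 0 := by
    intro k l f hf
    rw [Function.iterate_add_apply, hf, hzero]
  induction f using MvPolynomial.induction_on with
  | C a => exact ⟨1, by simp [hd, pderiv_C]⟩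
  | add f g hf hg =>
      obtain ⟨k1, h1⟩ := hf
      obtain ⟨k2, h2⟩ := hg
      refine ⟨k2 + k1, ?_⟩
      rw [hadd, hmono k1 k2 f h1]
      rw [add_comm k2 k1, hmono k2 k1 g h2, add_zero]
  | mul_X q j hq =>
      have claim : ∀ (k) (q : MvPolynomial σ R), d^[k] q = 0 → d^[k + 1] (q * X j) = 0 := by
        intro k
        induction k with
        | zero =>
            intro q hk
            have : q = 0 := hk
            subst this
            rw [zero_mul]; exact hzero 1
        | succ k ih =>
            intro q hk
            rw [Function.iterate_succ_apply]
            have hdq : d (q * X j) = d q * X j + q * pderiv i (X j) := by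
              simp only [hd, pderiv_mul]
            rw [hdq, hadd]
            have h1 : d^[k + 1] (d q * X j) = 0 := by
              apply ih
              rw [← Function.iterate_succ_apply]
              exact hk
            rw [h1, zero_add]
            rcases eq_or_ne j i with rfl | hne
            · rw [pderiv_X_self, mul_one]
              exact hk
            · rw [pderiv_X_of_ne hne, mul_zero, hzero]
      obtain ⟨k, hk⟩ := hq
      exact ⟨k + 1, claim k q hk⟩


lemma aeval_fix (f : MvPolynomial (Fin 3) ℂ) (hf : f ∈ supported ℂ ({1} : Set (Fin 3))) :
    aeval ![0, X 1, X 2] f = f := by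
  rw [MvPolynomial.supported_eq_adjoin_X] at hf
  induction hf using Algebra.adjoin_induction with
  | mem g hg =>
      obtain ⟨i, hi, rfl⟩ := hg
      obtain rfl : i = 1 := hi
      simp
  | algebraMap r => simp
  | add a b _ _ iha ihb => rw [map_add, iha, ihb]
  | mul a b _ _ iha ihb => rw [map_mul, iha, ihb]

lemma pderiv_supported (f : MvPolynomial (Fin 3) ℂ) (hf : f ∈ supported ℂ ({1} : Set (Fin 3)))
    {i : Fin 3} (hi : i ≠ 1) : pderiv i f = 0 := by
  apply pderiv_eq_zero_of_notMem_vars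
  intro hmem
  have := MvPolynomial.mem_supported.mp hf (Finset.mem_coe.mpr hmem)
  rw [Set.mem_singleton_iff] at this
  exact hi this

end Stmt2Aux


/-- For the derivation `∂ = x^n ∂_y + p(y) ∂_z` of `ℂ[x,y,z]` (`x = X 0`,
`y = X 1`, `z = X 2`) with `n ≥ 1`, `p ∈ ℂ[y]` nonconstant and `P ∈ ℂ[y]` an
integral of `p`, the kernel of `∂` is the `ℂ`-subalgebra generated by `x` and
`t = -x^n z + P(y)`. -/
theorem stmt_2 (n : ℕ) (hn : 1 ≤ n) (p P : MvPolynomial (Fin 3) ℂ)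
    (hp : p ∈ MvPolynomial.supported ℂ ({1} : Set (Fin 3)))
    (hpnc : p ∉ Set.range (MvPolynomial.C : ℂ → MvPolynomial (Fin 3) ℂ))
    (hP : P ∈ MvPolynomial.supported ℂ ({1} : Set (Fin 3)))
    (hPp : MvPolynomial.pderiv 1 P = p)
    (D : Derivation ℂ (MvPolynomial (Fin 3) ℂ) (MvPolynomial (Fin 3) ℂ))
    (hD : D = MvPolynomial.mkDerivation ℂ ![0, X 0 ^ n, p]) :
    ∀ f : MvPolynomial (Fin 3) ℂ,
      D f = 0 ↔ f ∈ Algebra.adjoin ℂ ({X 0, -(X 0 ^ n) * X 2 + P} :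
        Set (MvPolynomial (Fin 3) ℂ)) := by
  classical
  set t : MvPolynomial (Fin 3) ℂ := -(X 0 ^ n) * X 2 + P with ht
  have hDX0 : D (X 0) = 0 := by
    rw [hD]; simpa using MvPolynomial.mkDerivation_X ℂ ![0, X 0 ^ n, p] 0
  have hDX1 : D (X 1) = X 0 ^ n := by
    rw [hD]; simpa using MvPolynomial.mkDerivation_X ℂ ![0, X 0 ^ n, p] 1
  have hDX2 : D (X 2) = p := by
    rw [hD]; simpa using MvPolynomial.mkDerivation_X ℂ ![0, X 0 ^ n, p] 2
  have hDeq : ∀ f : MvPolynomial (Fin 3) ℂ,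
      D f = X 0 ^ n * pderiv 1 f + p * pderiv 2 f := by
    intro f
    induction f using MvPolynomial.induction_on with
    | C a => simp [derivation_C, pderiv_C]
    | add f g hf hg => rw [map_add, hf, hg, map_add, map_add]; ring
    | mul_X q i ih =>
        rw [Derivation.leibniz, ih, smul_eq_mul, smul_eq_mul]
        have hi3 : i = 0 ∨ i = 1 ∨ i = 2 := by fin_cases i <;> decide
        have ex1 : pderiv 1 (X 0 : MvPolynomial (Fin 3) ℂ) = 0 := pderiv_X_of_ne (by decide)
        have ex2 : pderiv 2 (X 0 : MvPolynomial (Fin 3) ℂ) = 0 := pderiv_X_of_ne (by decide)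
        have ez1 : pderiv 1 (X 2 : MvPolynomial (Fin 3) ℂ) = 0 := pderiv_X_of_ne (by decide)
        have ey2 : pderiv 2 (X 1 : MvPolynomial (Fin 3) ℂ) = 0 := pderiv_X_of_ne (by decide)
        rcases hi3 with rfl | rfl | rfl
        · rw [hDX0, pderiv_mul, pderiv_mul, ex1, ex2]; ring
        · rw [hDX1, pderiv_mul, pderiv_mul, pderiv_X_self, ey2]; ring
        · rw [hDX2, pderiv_mul, pderiv_mul, ez1, pderiv_X_self]; ring
  -- pderiv facts
  have ep0 : pderiv 0 p = 0 := Stmt2Aux.pderiv_supported p hp (by decide)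
  have ep2 : pderiv 2 p = 0 := Stmt2Aux.pderiv_supported p hp (by decide)
  have eP2 : pderiv 2 P = 0 := Stmt2Aux.pderiv_supported P hP (by decide)
  have ex1 : pderiv 1 (X 0 : MvPolynomial (Fin 3) ℂ) = 0 := pderiv_X_of_ne (by decide)
  have ex2 : pderiv 2 (X 0 : MvPolynomial (Fin 3) ℂ) = 0 := pderiv_X_of_ne (by decide)
  have ez1 : pderiv 1 (X 2 : MvPolynomial (Fin 3) ℂ) = 0 := pderiv_X_of_ne (by decide)
  have hpt1 : pderiv 1 t = p := by
    rw [ht]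
    simp [pderiv_mul, pderiv_pow, ex1, ez1, hPp]
  have hpt2 : pderiv 2 t = -(X 0 ^ n) := by
    rw [ht]
    simp [pderiv_mul, pderiv_pow, ex2, eP2, pderiv_X_self]
  have hDt : D t = 0 := by rw [hDeq t, hpt1, hpt2]; ring
  have hDx : D (X 0) = 0 := hDX0
  have hxA : (X 0 : MvPolynomial (Fin 3) ℂ) ∈ Algebra.adjoin ℂ ({X 0, t} : Set (MvPolynomial (Fin 3) ℂ)) :=
    Algebra.subset_adjoin (Set.mem_insert _ _)
  have htA : t ∈ Algebra.adjoin ℂ ({X 0, t} : Set (MvPolynomial (Fin 3) ℂ)) :=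
    Algebra.subset_adjoin (Set.mem_insert_iff.2 (Or.inr rfl))
  -- easy direction
  have hker : ∀ f ∈ Algebra.adjoin ℂ ({X 0, t} : Set (MvPolynomial (Fin 3) ℂ)), D f = 0 := by
    intro f hf
    induction hf using Algebra.adjoin_induction with
    | mem g hg =>
        rcases hg with rfl | hg
        · exact hDx
        · rw [Set.mem_singleton_iff] at hg; subst hg; exact hDt
    | algebraMap r => exact D.map_algebraMap r
    | add a b _ _ iha ihb => rw [map_add, iha, ihb, add_zero]
    | mul a b _ _ iha ihb => rw [Derivation.leibniz, iha, ihb, smul_zero, smul_zero, add_zero]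
  -- primality of X 0
  have hprime : Prime (X 0 : MvPolynomial (Fin 3) ℂ) := by
    rw [← MulEquiv.prime_iff (MvPolynomial.finSuccEquiv ℂ 2).toRingEquiv.toMulEquiv]
    have : (MvPolynomial.finSuccEquiv ℂ 2).toRingEquiv.toMulEquiv (X 0 : MvPolynomial (Fin 3) ℂ)
        = Polynomial.X := by
      simpa using MvPolynomial.finSuccEquiv_X_zero (R := ℂ) (n := 2)
    rw [this]
    exact Polynomial.prime_X
  have hxne : (X 0 : MvPolynomial (Fin 3) ℂ) ≠ 0 := hprime.ne_zero
  have hXnne : (X 0 : MvPolynomial (Fin 3) ℂ) ^ n ≠ 0 := pow_ne_zero _ hxne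
  have hpne : p ≠ 0 := by
    rintro rfl
    exact hpnc ⟨0, by simp⟩
  have hndvd : ¬ (X 0 : MvPolynomial (Fin 3) ℂ) ∣ p := by
    rintro ⟨q, hq⟩
    apply hpne
    have := Stmt2Aux.aeval_fix p hp
    rw [hq, map_mul] at this
    rw [hq, ← this]
    simp
  have hDxn : D (X 0 ^ n) = 0 := by
    rw [Derivation.leibniz_pow, hDx, smul_zero, smul_zero]
  have e0n : pderiv 2 ((X 0 : MvPolynomial (Fin 3) ℂ) ^ n) = 0 := by
    rw [pderiv_pow, ex2, mul_zero]
  have e1n : pderiv 1 ((X 0 : MvPolynomial (Fin 3) ℂ) ^ n) = 0 := by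
    rw [pderiv_pow, ex1, mul_zero]
  -- monomials of the monoid closure
  have hmon : ∀ m ∈ Submonoid.closure ({X 0, t} : Set (MvPolynomial (Fin 3) ℂ)),
      ∃ i k : ℕ, m = X 0 ^ i * t ^ k := by
    intro m hm
    induction hm using Submonoid.closure_induction with
    | mem g hg =>
        rcases hg with rfl | hg
        · exact ⟨1, 0, by ring⟩
        · rw [Set.mem_singleton_iff] at hg; subst hg; exact ⟨0, 1, by ring⟩
    | one => exact ⟨0, 0, by ring⟩
    | mul a b ha hb iha ihb =>
        obtain ⟨i1, k1, rfl⟩ := iha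
        obtain ⟨i2, k2, rfl⟩ := ihb
        exact ⟨i1 + i2, k1 + k2, by ring⟩
  -- integration in z within the subalgebra
  have hint : ∀ u ∈ Algebra.adjoin ℂ ({X 0, t} : Set (MvPolynomial (Fin 3) ℂ)),
      ∃ h ∈ Algebra.adjoin ℂ ({X 0, t} : Set (MvPolynomial (Fin 3) ℂ)),
        pderiv 2 h = X 0 ^ n * u := by
    intro u hu
    have hu' : u ∈ Submodule.span ℂ
        ((Submonoid.closure ({X 0, t} : Set (MvPolynomial (Fin 3) ℂ)) : Set (MvPolynomial (Fin 3) ℂ))) := by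
      rw [← Algebra.adjoin_eq_span]; exact hu
    clear hu
    induction hu' using Submodule.span_induction with
    | mem m hm =>
        obtain ⟨i, k, rfl⟩ := hmon m hm
        refine ⟨(-(((k : ℂ) + 1)⁻¹)) • (X 0 ^ i * t ^ (k + 1)),
          Subalgebra.smul_mem _ (mul_mem (pow_mem hxA i) (pow_mem htA (k + 1))) _, ?_⟩
        rw [Derivation.map_smul, pderiv_mul, pderiv_pow, pderiv_pow, ex2, hpt2]
        simp only [Nat.add_sub_cancel]
        rw [MvPolynomial.smul_eq_C_mul]
        have hcast : ((k + 1 : ℕ) : MvPolynomial (Fin 3) ℂ) = C ((k : ℂ) + 1) := by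
          rw [← MvPolynomial.C_eq_coe_nat]
          push_cast
          ring_nf
        rw [hcast]
        have hC : (C (-(((k : ℂ) + 1)⁻¹)) : MvPolynomial (Fin 3) ℂ) * C ((k : ℂ) + 1) = -1 := by
          rw [← map_mul]
          rw [show (-(((k : ℂ) + 1)⁻¹)) * ((k : ℂ) + 1) = -1 by
            rw [neg_mul, inv_mul_cancel₀ (Nat.cast_add_one_ne_zero k)]]
          simp
        linear_combination (-(X 0 ^ i * (t ^ k * X 0 ^ n))) * hC
    | zero => exact ⟨0, zero_mem _, by simp⟩
    | add a b ha hb iha ihb =>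
        obtain ⟨h1, h1A, e1⟩ := iha
        obtain ⟨h2, h2A, e2⟩ := ihb
        exact ⟨h1 + h2, add_mem h1A h2A, by rw [map_add, e1, e2, mul_add]⟩
    | smul c a ha iha =>
        obtain ⟨h1, h1A, e1⟩ := iha
        exact ⟨c • h1, Subalgebra.smul_mem _ h1A c, by rw [Derivation.map_smul, e1, mul_smul_comm]⟩
  -- main induction
  have key : ∀ (k : ℕ) (f : MvPolynomial (Fin 3) ℂ),
      (fun g : MvPolynomial (Fin 3) ℂ => pderiv 2 g)^[k] f = 0 → D f = 0 →
      f ∈ Algebra.adjoin ℂ ({X 0, t} : Set (MvPolynomial (Fin 3) ℂ)) := by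
    intro k
    induction k with
    | zero =>
        intro f h0 _
        simp only [Function.iterate_zero, id_eq] at h0
        rw [h0]; exact zero_mem _
    | succ k ih =>
        intro f hit hDf
        have hit' : (fun g : MvPolynomial (Fin 3) ℂ => pderiv 2 g)^[k] (pderiv 2 f) = 0 := by
          rw [← Function.iterate_succ_apply]; exact hit
        have hDg : D (pderiv 2 f) = 0 := by
          have hcomm : D (pderiv 2 f) = pderiv 2 (D f) := by
            calc D (pderiv 2 f)
                = X 0 ^ n * pderiv 1 (pderiv 2 f) + p * pderiv 2 (pderiv 2 f) := hDeq _
              _ = pderiv 2 (X 0 ^ n * pderiv 1 f + p * pderiv 2 f) := by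
                  rw [map_add, pderiv_mul, pderiv_mul, e0n, ep2,
                    Stmt2Aux.pderiv_comm 1 2 f]
                  ring
              _ = pderiv 2 (D f) := by rw [hDeq f]
          rw [hcomm, hDf, map_zero]
        have hdvd : (X 0 : MvPolynomial (Fin 3) ℂ) ^ n ∣ p * pderiv 2 f := by
          refine ⟨-(pderiv 1 f), ?_⟩
          have h0 := hDeq f
          rw [hDf] at h0
          linear_combination -h0
        have hdvd2 : (X 0 : MvPolynomial (Fin 3) ℂ) ^ n ∣ pderiv 2 f :=
          hprime.pow_dvd_of_dvd_mul_left n hndvd hdvd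
        obtain ⟨u, hu⟩ := hdvd2
        have hDu : D u = 0 := by
          have h1 : D (X 0 ^ n * u) = X 0 ^ n * D u := by
            rw [Derivation.leibniz, hDxn, smul_zero, add_zero, smul_eq_mul]
          have h2 : (X 0 : MvPolynomial (Fin 3) ℂ) ^ n * D u = 0 := by
            rw [← h1, ← hu, hDg]
          exact (mul_eq_zero.1 h2).resolve_left hXnne
        have hfac : ∀ (m : ℕ) (v : MvPolynomial (Fin 3) ℂ),
            (fun g : MvPolynomial (Fin 3) ℂ => pderiv 2 g)^[m] (X 0 ^ n * v)
              = X 0 ^ n * (fun g : MvPolynomial (Fin 3) ℂ => pderiv 2 g)^[m] v := by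
          intro m
          induction m with
          | zero => intro v; rfl
          | succ m ihm =>
              intro v
              rw [Function.iterate_succ_apply, Function.iterate_succ_apply]
              have hstep : pderiv 2 (X 0 ^ n * v) = X 0 ^ n * pderiv 2 v := by
                rw [pderiv_mul, e0n, zero_mul, zero_add]
              show (fun g : MvPolynomial (Fin 3) ℂ => pderiv 2 g)^[m] (pderiv 2 (X 0 ^ n * v)) = _
              rw [hstep, ihm]
        have hitu : (fun g : MvPolynomial (Fin 3) ℂ => pderiv 2 g)^[k] u = 0 := by
          have h2 : (X 0 : MvPolynomial (Fin 3) ℂ) ^ n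
              * (fun g : MvPolynomial (Fin 3) ℂ => pderiv 2 g)^[k] u = 0 := by
            rw [← hfac, ← hu, hit']
          exact (mul_eq_zero.1 h2).resolve_left hXnne
        have huA := ih u hitu hDu
        obtain ⟨h, hhA, hph⟩ := hint u huA
        have h1 : pderiv 2 (f - h) = 0 := by rw [map_sub, hph, hu, sub_self]
        have h2 : D (f - h) = 0 := by rw [map_sub, hDf, hker h hhA, sub_zero]
        have h3 : pderiv 1 (f - h) = 0 := by
          have h0 := hDeq (f - h)
          rw [h2, h1, mul_zero, add_zero] at h0
          exact (mul_eq_zero.1 h0.symm).resolve_left hXnne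
        have h4 : f - h ∈ MvPolynomial.supported ℂ ({0} : Set (Fin 3)) := by
          rw [MvPolynomial.mem_supported]
          intro j hj
          rw [Finset.mem_coe, MvPolynomial.mem_vars] at hj
          obtain ⟨m, hm, hjm⟩ := hj
          rw [MvPolynomial.mem_support_iff] at hm
          rw [Finsupp.mem_support_iff] at hjm
          have hj3 : j = 0 ∨ j = 1 ∨ j = 2 := by fin_cases j <;> decide
          rcases hj3 with rfl | rfl | rfl
          · exact Set.mem_singleton _
          · exact absurd (Stmt2Aux.coeff_eq_zero_of_pderiv_eq_zero _ _ h3 m hjm) hm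
          · exact absurd (Stmt2Aux.coeff_eq_zero_of_pderiv_eq_zero _ _ h1 m hjm) hm
        have h5 : f - h ∈ Algebra.adjoin ℂ ({X 0, t} : Set (MvPolynomial (Fin 3) ℂ)) := by
          have hle : MvPolynomial.supported ℂ ({0} : Set (Fin 3))
              ≤ Algebra.adjoin ℂ ({X 0, t} : Set (MvPolynomial (Fin 3) ℂ)) := by
            rw [MvPolynomial.supported_eq_adjoin_X]
            apply Algebra.adjoin_mono
            rintro g ⟨i, hi, rfl⟩
            obtain rfl : i = (0 : Fin 3) := hi
            exact Set.mem_insert _ _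
          exact hle h4
        have hsum := add_mem h5 hhA
        rwa [sub_add_cancel] at hsum
  intro f
  constructor
  · intro hDf
    obtain ⟨k, hk⟩ := Stmt2Aux.exists_iterate_pderiv_eq_zero 2 f
    exact key k f hk hDf
  · intro hf
    exact hker f hf
end

section
/- Let B be a commutative ℂ-algebra and ∂ a locally nilpotent derivation of B admitting a slice s (∂s = 1). Then B is isomorphic as a ker(∂)-algebra to the polynomial ring ker(∂)[s]; more precisely the map ker(∂)[T] → B sending T ↦ s is an isomorphism of ker(∂)-algebras. -/
/-- The kernel of a derivation, as a subalgebra. -/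
def derivationKer {B : Type*} [CommRing B] [Algebra ℂ B]
    (D : Derivation ℂ B B) : Subalgebra ℂ B where
  carrier := {b : B | D b = 0}
  mul_mem' := fun {a b} ha hb => by
    have ha' : D a = 0 := ha
    have hb' : D b = 0 := hb
    show D (a * b) = 0
    rw [D.leibniz, ha', hb', smul_zero, smul_zero, add_zero]
  add_mem' := fun {a b} ha hb => by
    have ha' : D a = 0 := ha
    have hb' : D b = 0 := hb
    show D (a + b) = 0
    rw [map_add, ha', hb', add_zero]
  algebraMap_mem' := fun c => D.map_algebraMap c

open Polynomial in
lemma D_aeval {B : Type*} [CommRing B] [Algebra ℂ B]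
    (D : Derivation ℂ B B) (s : B) (hs : D s = 1)
    (p : Polynomial ↥(derivationKer D)) :
    D (aeval (R := ↥(derivationKer D)) s p) = aeval (R := ↥(derivationKer D)) s p.derivative := by
  induction p using Polynomial.induction_on' with
  | add p q hp hq =>
      rw [map_add (aeval (R := ↥(derivationKer D)) s), map_add, hp, hq, derivative_add, map_add (aeval (R := ↥(derivationKer D)) s)]
  | monomial n a =>
      rw [aeval_monomial, derivative_monomial, aeval_monomial]
      have ha : D ((algebraMap ↥(derivationKer D) B) a) = 0 := a.2
      rw [D.leibniz, ha, smul_zero, add_zero, D.leibniz_pow, hs]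
      cases n with
      | zero => simp
      | succ n =>
          have : (algebraMap ↥(derivationKer D) B) (a * (↑(n+1) : ↥(derivationKer D)))
              = (algebraMap ↥(derivationKer D) B) a * (n+1 : B) := by
            push_cast [map_mul]
            simp
          simp only [Nat.add_sub_cancel, this, smul_eq_mul, nsmul_eq_mul, smul_mul_assoc,
            mul_one]
          push_cast
          ring

/-- Rentschler's slice theorem: if a locally nilpotent derivation `∂` of a
commutative `ℂ`-algebra `B` admits a slice `s` (`∂ s = 1`), then the evaluation
map `ker(∂)[T] → B`, `T ↦ s`, is an isomorphism of `ker(∂)`-algebras. -/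
theorem stmt_4 {B : Type*} [CommRing B] [Algebra ℂ B]
    (D : Derivation ℂ B B)
    (hLN : ∀ b : B, ∃ m : ℕ, (⇑D)^[m] b = 0)
    (s : B) (hs : D s = 1) :
    Function.Bijective
      (Polynomial.aeval (R := ↥(derivationKer D)) s :
        Polynomial ↥(derivationKer D) →ₐ[↥(derivationKer D)] B) := by
  set K := ↥(derivationKer D)
  -- cancellation of natural numbers in K
  have hcancel : ∀ (n : ℕ) (x : K), n ≠ 0 → x * (n : K) = 0 → x = 0 := by
    intro n x hn hx
    have h1 : ((n : ℕ) : ℂ) • x = x * (n : K) := by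
      rw [Nat.cast_smul_eq_nsmul, nsmul_eq_mul, mul_comm]
    have h2 : ((n : ℕ) : ℂ) • x = 0 := by rw [h1, hx]
    have hn' : ((n : ℕ) : ℂ) ≠ 0 := Nat.cast_ne_zero.mpr hn
    calc x = ((n:ℂ))⁻¹ • (((n:ℂ)) • x) := (inv_smul_smul₀ hn' x).symm
    _ = 0 := by rw [h2, smul_zero]
  constructor
  · -- injectivity
    rw [injective_iff_map_eq_zero]
    have main : ∀ n (p : Polynomial K), p.natDegree ≤ n →
        Polynomial.aeval (R := K) s p = 0 → p = 0 := by
      intro n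
      induction n with
      | zero =>
          intro p hdeg hp
          rw [Polynomial.eq_C_of_natDegree_le_zero hdeg] at hp ⊢
          rw [Polynomial.aeval_C] at hp
          have : p.coeff 0 = 0 := Subtype.ext hp
          rw [this, map_zero]
      | succ n ih =>
          intro p hdeg hp
          have h1 : Polynomial.aeval (R := K) s p.derivative = 0 := by
            rw [← D_aeval D s hs, hp, map_zero]
          have h2 : p.derivative = 0 := by
            refine ih _ ?_ h1
            exact le_trans (Polynomial.natDegree_derivative_le p) (by omega)
          have hk : ∀ k, p.coeff (k+1) = 0 := by
            intro k
            have h3 : (Polynomial.derivative p).coeff k = 0 := by rw [h2]; simp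
            rw [Polynomial.coeff_derivative] at h3
            refine hcancel (k+1) _ (Nat.succ_ne_zero k) ?_
            rw [← h3]; push_cast; ring
          have hpC : p = Polynomial.C (p.coeff 0) := by
            ext k
            cases k with
            | zero => simp
            | succ k => simp [hk k]
          rw [hpC] at hp ⊢
          rw [Polynomial.aeval_C] at hp
          have : p.coeff 0 = 0 := Subtype.ext hp
          rw [this, map_zero]
    intro p hp
    exact main p.natDegree p le_rfl hp
  · -- surjectivity
    intro b
    obtain ⟨m, hm⟩ := hLN b
    clear hLN
    induction m generalizing b with
    | zero =>
        simp only [Function.iterate_zero, id_eq] at hm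
        exact ⟨0, by simp [hm]⟩
    | succ m ih =>
        have hDb : (⇑D)^[m] (D b) = 0 := by
          rwa [Function.iterate_succ_apply] at hm
        obtain ⟨p, hp⟩ := ih (D b) hDb
        set P := p.sum (fun n a => Polynomial.monomial (n+1) ((((n:ℂ)+1)⁻¹) • a)) with hPdef
        have hderiv : P.derivative = p := by
          rw [hPdef, Polynomial.sum_def, map_sum]
          have : ∀ n ∈ p.support,
              Polynomial.derivative (Polynomial.monomial (n+1) ((((n:ℂ)+1)⁻¹) • p.coeff n))
              = Polynomial.monomial n (p.coeff n) := by
            intro n _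
            rw [Polynomial.derivative_monomial, Nat.add_sub_cancel]
            congr 1
            have : ((((n:ℂ)+1)⁻¹) • p.coeff n) * ((n:K)+1) = ((n:ℂ)+1) • ((((n:ℂ)+1)⁻¹) • p.coeff n) := by
              have h4 : ((n:K)+1) = (((n+1 : ℕ) : ℂ)) • (1 : K) := by
                rw [Nat.cast_smul_eq_nsmul]; push_cast; simp [nsmul_eq_mul]
              rw [h4]; push_cast
              rw [mul_comm, smul_mul_assoc, one_mul]
            push_cast
            rw [this, smul_smul, mul_inv_cancel₀ (by have h5 : ((n+1:ℕ):ℂ) ≠ 0 := Nat.cast_ne_zero.mpr (Nat.succ_ne_zero n); push_cast at h5; exact h5), one_smul]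
          rw [Finset.sum_congr rfl this]
          exact (Polynomial.sum_def _ _).symm.trans (Polynomial.sum_monomial_eq p)
        have hDP : D (Polynomial.aeval (R := K) s P) = D b := by
          rw [D_aeval D s hs, hderiv, hp]
        have hker : b - Polynomial.aeval (R := K) s P ∈ derivationKer D := by
          show D _ = 0
          rw [map_sub, hDP, sub_self]
        refine ⟨Polynomial.C ⟨b - Polynomial.aeval (R := K) s P, hker⟩ + P, ?_⟩
        rw [map_add, Polynomial.aeval_C]
        show (b - Polynomial.aeval (R := K) s P) + Polynomial.aeval (R := K) s P = b
        ring
end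

section
/- Let A be a discrete valuation ring over ℂ with uniformizer x and residue field ℂ, n ≥ 1, and p₁, p₂ ∈ A[y] with p̄₁ = 0 in ℂ[y] and (x^n, p₁, p₂) the unit ideal. Then p₂ = c + x·q for some nonzero constant c ∈ ℂ ⊂ A and q ∈ A[y]; moreover, after the change of variables z₁ ↦ z₁ + z₂, the derivation x^n∂_y + p₁∂_{z₁} + p₂∂_{z₂} becomes twin-triangular with both residue polynomials nonzero modulo x. -/
open MvPolynomial Polynomial

/-- Let `A` be a DVR over `ℂ` with uniformizer `x` and residue field `ℂ`
(realized by a surjective `π : A → ℂ` with kernel `(x)` splitting the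
`ℂ`-algebra structure), `n ≥ 1`, and `p₁, p₂ ∈ A[y]` with `p̄₁ = 0` and
`(x^n, p₁, p₂)` the unit ideal of `A[y,z₁,z₂]`. Then `p₂ = c + x·q` with
`c ∈ ℂ*`, and after the change of variables `z₁ ↦ z₁ + z₂` (replacing
`(p₁,p₂)` by `(p₁+p₂, p₂)`) both residue polynomials are nonzero mod `x`. -/
theorem stmt_7 (A : Type*) [CommRing A] [IsDomain A] [IsDiscreteValuationRing A]
    [Algebra ℂ A] (x : A) (hx : Irreducible x)
    (π : A →+* ℂ) (hπsurj : Function.Surjective π)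
    (hπker : RingHom.ker π = Ideal.span {x})
    (hπalg : ∀ c : ℂ, π (algebraMap ℂ A c) = c)
    (n : ℕ) (hn : 1 ≤ n) (p₁ p₂ : Polynomial A)
    (hp₁bar : p₁.map π = 0)
    (hunit : Ideal.span
        ({MvPolynomial.C (x ^ n),
          Polynomial.aeval (MvPolynomial.X 0) p₁,
          Polynomial.aeval (MvPolynomial.X 0) p₂} :
          Set (MvPolynomial (Fin 3) A)) = ⊤) :
    (∃ c : ℂ, c ≠ 0 ∧ ∃ q : Polynomial A,
        p₂ = Polynomial.C (algebraMap ℂ A c) + Polynomial.C x * q) ∧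
      (p₁ + p₂).map π ≠ 0 ∧ p₂.map π ≠ 0 := by
  have hπx : π x = 0 := by
    have : x ∈ RingHom.ker π := by
      rw [hπker]; exact Ideal.mem_span_singleton_self x
    simpa [RingHom.mem_ker] using this
  -- the specialization A[y,z₁,z₂] → ℂ[y]
  set φ : MvPolynomial (Fin 3) A →+* Polynomial ℂ :=
    MvPolynomial.eval₂Hom (Polynomial.C.comp π)
      (fun i => if i = 0 then Polynomial.X else 0) with hφ
  have hφC : ∀ a : A, φ (MvPolynomial.C a) = Polynomial.C (π a) := by
    intro a; simp [hφ]
  have hφaeval : ∀ p : Polynomial A,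
      φ (Polynomial.aeval (MvPolynomial.X 0) p) = p.map π := by
    intro p
    rw [Polynomial.aeval_def, Polynomial.hom_eval₂]
    have h1 : φ (MvPolynomial.X (0 : Fin 3)) = Polynomial.X := by simp [hφ]
    have h2 : φ.comp (algebraMap A (MvPolynomial (Fin 3) A)) =
        Polynomial.C.comp π := by
      ext a; simp [hφ, MvPolynomial.algebraMap_eq]
    rw [h1, h2]
    rfl
  -- image of the three generators
  have hg1 : φ (MvPolynomial.C (x ^ n)) = 0 := by
    rw [hφC, map_pow, hπx, zero_pow (by omega), map_zero]
  have hg2 : φ (Polynomial.aeval (MvPolynomial.X 0) p₁) = 0 := by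
    rw [hφaeval, hp₁bar]
  have hg3 : φ (Polynomial.aeval (MvPolynomial.X 0) p₂) = p₂.map π := by
    rw [hφaeval]
  -- p₂.map π is a unit
  have hmem : (1 : Polynomial ℂ) ∈ Ideal.span ({p₂.map π} : Set (Polynomial ℂ)) := by
    have h1 : (1 : MvPolynomial (Fin 3) A) ∈ Ideal.span
        ({MvPolynomial.C (x ^ n),
          Polynomial.aeval (MvPolynomial.X 0) p₁,
          Polynomial.aeval (MvPolynomial.X 0) p₂} :
          Set (MvPolynomial (Fin 3) A)) := by
      rw [hunit]; trivial
    have h2 := Ideal.mem_map_of_mem φ h1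
    rw [Ideal.map_span] at h2
    simp only [Set.image_insert_eq, Set.image_singleton, hg1, hg2, hg3, map_one] at h2
    have hsub : ({(0 : Polynomial ℂ), 0, p₂.map π} : Set (Polynomial ℂ)) ⊆
        (Ideal.span ({p₂.map π} : Set (Polynomial ℂ)) : Set (Polynomial ℂ)) := by
      intro z hz
      rcases hz with rfl | rfl | rfl
      · exact Ideal.zero_mem _
      · exact Ideal.zero_mem _
      · exact Ideal.subset_span rfl
    exact Ideal.span_le.mpr hsub h2
  have hunit₂ : IsUnit (p₂.map π) := by
    rw [← Ideal.span_singleton_eq_top, Ideal.eq_top_iff_one]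
    exact hmem
  obtain ⟨c, hc, hceq⟩ := Polynomial.isUnit_iff.mp hunit₂
  have hc0 : c ≠ 0 := fun h => by simp [h] at hc
  -- p₂ = C c + x q
  have hdiff : (p₂ - Polynomial.C (algebraMap ℂ A c)).map π = 0 := by
    rw [Polynomial.map_sub, Polynomial.map_C, hπalg, hceq, sub_self]
  have hdvd : Polynomial.C x ∣ p₂ - Polynomial.C (algebraMap ℂ A c) := by
    rw [Polynomial.C_dvd_iff_dvd_coeff]
    intro i
    have : π ((p₂ - Polynomial.C (algebraMap ℂ A c)).coeff i) = 0 := by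
      rw [← Polynomial.coeff_map, hdiff, Polynomial.coeff_zero]
    have hm : (p₂ - Polynomial.C (algebraMap ℂ A c)).coeff i ∈ RingHom.ker π := this
    rw [hπker, Ideal.mem_span_singleton] at hm
    exact hm
  obtain ⟨q, hq⟩ := hdvd
  refine ⟨⟨c, hc0, q, by linear_combination hq⟩, ?_, ?_⟩
  · rw [Polynomial.map_add, hp₁bar, zero_add, ← hceq]
    simpa using hc0
  · rw [← hceq]; simpa using hc0
end

section
/- Let P ∈ ℂ[y] be nonconstant, and let α ∈ ℂ[t] be a polynomial whose zero set contains all critical values of P (values P(a) with P'(a) = 0) and with α ≠ 0. Then the ring extension ℂ[t]_α → (ℂ[t]_α)[y]/(P(y) - t) is finite étale. -/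
open Polynomial
theorem aux_prod_dvd {g : ℂ[X]} (s : Multiset ℂ) (h : ∀ a ∈ s, (X - C a) ∣ g) :
    (s.map fun a => X - C a).prod ∣ g ^ Multiset.card s := by
  induction s using Multiset.induction_on with
  | empty => simp
  | cons a s ih =>
    simp only [Multiset.map_cons, Multiset.prod_cons, Multiset.card_cons, pow_succ]
    exact mul_comm g (g ^ Multiset.card s) ▸
      mul_dvd_mul (h a (Multiset.mem_cons_self a s)) (ih fun b hb => h b (Multiset.mem_cons_of_mem hb))

theorem aux_dvd_pow {f g : ℂ[X]} (hf : f ≠ 0) (h : ∀ a : ℂ, f.eval a = 0 → g.eval a = 0) :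
    f ∣ g ^ Multiset.card f.roots := by
  have hsplit : f = C f.leadingCoeff * (f.roots.map fun a => X - C a).prod :=
    (IsAlgClosed.splits f).eq_prod_roots
  have hdvd : (f.roots.map fun a => X - C a).prod ∣ g ^ Multiset.card f.roots :=
    aux_prod_dvd _ fun a ha => dvd_iff_isRoot.mpr (h a ((mem_roots hf).mp ha))
  calc f = C f.leadingCoeff * (f.roots.map fun a => X - C a).prod := hsplit
    _ ∣ g ^ Multiset.card f.roots :=
      (IsUnit.mul_left_dvd (isUnit_C.mpr (isUnit_iff_ne_zero.mpr (leadingCoeff_ne_zero.mpr hf)))).mpr hdvd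

universe u


theorem aux_formallyEtale {R : Type u} [CommRing R] (f : R[X])
    (h : IsUnit (AdjoinRoot.mk f (derivative f))) :
    Algebra.FormallyEtale R (AdjoinRoot f) := by
  rw [Algebra.FormallyEtale.iff_comp_bijective]
  intro B _ _ I hI
  have hnil : IsNilpotent I := ⟨2, hI⟩
  constructor
  · -- injectivity of lifts
    intro g₁ g₂ hg
    apply AdjoinRoot.algHom_ext
    set b₁ := g₁ (AdjoinRoot.root f) with hb₁
    set b₂ := g₂ (AdjoinRoot.root f) with hb₂
    have haev : ∀ (g : AdjoinRoot f →ₐ[R] B), aeval (g (AdjoinRoot.root f)) f = 0 := by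
      intro g
      rw [aeval_algHom_apply, AdjoinRoot.aeval_eq, AdjoinRoot.mk_self, map_zero]
    have hmem : b₂ - b₁ ∈ I := by
      have : Ideal.Quotient.mk I b₁ = Ideal.Quotient.mk I b₂ := by
        have := congrArg (fun g : AdjoinRoot f →ₐ[R] B ⧸ I => g (AdjoinRoot.root f)) hg
        simpa using this
      rwa [Ideal.Quotient.eq, ← neg_sub, neg_mem_iff] at this
    have hsq : (b₂ - b₁) ^ 2 = 0 := by
      rw [← Ideal.mem_bot, ← hI, pow_two, pow_two]; exact Ideal.mul_mem_mul hmem hmem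
    have key : aeval b₁ (derivative f) * (b₂ - b₁) = 0 := by
      have h2 : aeval b₂ f = 0 := haev g₂
      have : b₂ = b₁ + (b₂ - b₁) := by ring
      rw [this, ← eval_map_algebraMap, Polynomial.eval_add_of_sq_eq_zero _ _ _ hsq,
        derivative_map, eval_map_algebraMap, eval_map_algebraMap, haev g₁, zero_add] at h2
      exact h2
    have hu : IsUnit (aeval b₁ (derivative f)) := by
      have := h.map g₁
      rwa [← AdjoinRoot.aeval_eq, ← aeval_algHom_apply] at this
    have : b₂ - b₁ = 0 := (hu.mul_right_eq_zero).mp key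
    exact (sub_eq_zero.mp this).symm
  · -- surjectivity of lifts
    intro g
    obtain ⟨b₀, hb₀⟩ := Ideal.Quotient.mk_surjective (g (AdjoinRoot.root f))
    have hfb₀ : aeval b₀ f ∈ I := by
      rw [← Ideal.Quotient.eq_zero_iff_mem]
      have : (Ideal.Quotient.mkₐ R I) (aeval b₀ f) = aeval ((Ideal.Quotient.mkₐ R I) b₀) f :=
        (aeval_algHom_apply (Ideal.Quotient.mkₐ R I) b₀ f).symm
      have h2 : (Ideal.Quotient.mkₐ R I) b₀ = g (AdjoinRoot.root f) := hb₀
      rw [show Ideal.Quotient.mk I (aeval b₀ f) = (Ideal.Quotient.mkₐ R I) (aeval b₀ f) from rfl,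
        this, h2, aeval_algHom_apply, AdjoinRoot.aeval_eq, AdjoinRoot.mk_self, map_zero]
    have hu : IsUnit (aeval b₀ (derivative f)) := by
      rw [← IsNilpotent.isUnit_quotient_mk_iff hnil]
      have : Ideal.Quotient.mk I (aeval b₀ (derivative f))
          = aeval (g (AdjoinRoot.root f)) (derivative f) := by
        rw [← hb₀]; exact (aeval_algHom_apply (Ideal.Quotient.mkₐ R I) b₀ (derivative f)).symm
      rw [this, aeval_algHom_apply, AdjoinRoot.aeval_eq]
      exact h.map g
    set ε := -(aeval b₀ f * ↑hu.unit⁻¹) with hε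
    have hεI : ε ∈ I := neg_mem (Ideal.mul_mem_right _ _ hfb₀)
    have hεsq : ε ^ 2 = 0 := by
      rw [← Ideal.mem_bot, ← hI, pow_two, pow_two]; exact Ideal.mul_mem_mul hεI hεI
    have hroot : aeval (b₀ + ε) f = 0 := by
      rw [← eval_map_algebraMap, Polynomial.eval_add_of_sq_eq_zero _ _ _ hεsq, derivative_map,
        eval_map_algebraMap, eval_map_algebraMap, hε]
      ring_nf
      rw [mul_assoc, hu.mul_val_inv, mul_one, sub_self]
    have hroot' : eval₂ (Algebra.ofId R B : R →+* B) (b₀ + ε) f = 0 := by rw [← hroot, aeval_def]; rfl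
    refine ⟨AdjoinRoot.liftAlgHom f (Algebra.ofId R B) (b₀ + ε) hroot', ?_⟩
    apply AdjoinRoot.algHom_ext
    show Ideal.Quotient.mk I (AdjoinRoot.liftAlgHom f (Algebra.ofId R B) (b₀ + ε) hroot' (AdjoinRoot.root f))
      = g (AdjoinRoot.root f)
    rw [AdjoinRoot.liftAlgHom_root, map_add, Ideal.Quotient.eq_zero_iff_mem.mpr hεI, add_zero, hb₀]

/-- Let `P ∈ ℂ[y]` be nonconstant and `α ∈ ℂ[t]` a nonzero polynomial whose zero
set contains all critical values of `P`. Then, with `R = ℂ[t]_α` the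
localization away from `α`, the extension `R → R[y]/(P(y) - t)` is finite
étale. -/
theorem stmt_9 (P α : Polynomial ℂ) (hP : 0 < P.natDegree) (hα : α ≠ 0)
    (hcrit : ∀ a : ℂ, (Polynomial.derivative P).eval a = 0 →
      α.eval (P.eval a) = 0) :
    Module.Finite (Localization.Away α)
        (Polynomial (Localization.Away α) ⧸
          Ideal.span ({P.map (algebraMap ℂ (Localization.Away α)) -
            Polynomial.C (algebraMap (Polynomial ℂ) (Localization.Away α)
              Polynomial.X)} : Set (Polynomial (Localization.Away α)))) ∧
      Algebra.Etale (Localization.Away α)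
        (Polynomial (Localization.Away α) ⧸
          Ideal.span ({P.map (algebraMap ℂ (Localization.Away α)) -
            Polynomial.C (algebraMap (Polynomial ℂ) (Localization.Away α)
              Polynomial.X)} : Set (Polynomial (Localization.Away α)))) := by
  haveI : IsDomain (Localization.Away α) :=
    IsLocalization.isDomain_of_le_nonZeroDivisors (Localization.Away α)
      (powers_le_nonZeroDivisors_of_noZeroDivisors hα)
  set φ := algebraMap ℂ (Localization.Away α) with hφ
  set T := algebraMap (Polynomial ℂ) (Localization.Away α) Polynomial.X with hT
  set Q := P.map φ - C T with hQdef
  have hP0 : P ≠ 0 := fun h => by simp [h] at hP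
  have hinj : Function.Injective φ := RingHom.injective φ
  have hdeg : degree (C T) < degree (P.map φ) := by
    calc degree (C T) ≤ 0 := degree_C_le
      _ < degree P := natDegree_pos_iff_degree_pos.mp hP
      _ = degree (P.map φ) := (degree_map_eq_of_injective hinj P).symm
  have hlc : Q.leadingCoeff = φ P.leadingCoeff := by
    rw [hQdef, leadingCoeff_sub_of_degree_lt hdeg, leadingCoeff_map_of_injective hinj]
  have hu : IsUnit Q.leadingCoeff := by
    rw [hlc]
    exact (isUnit_iff_ne_zero.mpr (leadingCoeff_ne_zero.mpr hP0)).map φ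
  set c := hu.unit with hc
  set Q' := C (↑c⁻¹ : Localization.Away α) * Q with hQ'def
  have hmonic : Q'.Monic := by
    have hcc : (↑c⁻¹ : Localization.Away α) * Q.leadingCoeff = 1 := by
      rw [← hu.unit_spec]; exact Units.inv_mul c
    show Q'.leadingCoeff = 1
    rw [hQ'def, leadingCoeff_mul' (by rw [leadingCoeff_C, hcc]; exact one_ne_zero),
      leadingCoeff_C, hcc]
  have hspan : Ideal.span ({Q'} : Set (Polynomial (Localization.Away α))) = Ideal.span {Q} := by
    rw [hQ'def]
    exact Ideal.span_singleton_mul_left_unit (isUnit_C.mpr c⁻¹.isUnit) Q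
  rw [← hspan]
  -- key computations
  have hQQ' : Q = Q' * C (↑c : Localization.Away α) := by
    rw [hQ'def, mul_comm (C (↑c⁻¹ : Localization.Away α)) Q, mul_assoc, ← C_mul,
      Units.inv_mul, C_1, mul_one]
  have hQmem : AdjoinRoot.mk Q' Q = 0 := AdjoinRoot.mk_eq_zero.mpr (Dvd.intro _ hQQ'.symm)
  have hroot : AdjoinRoot.mk Q' (P.map φ) = AdjoinRoot.mk Q' (C T) := by
    rw [hQdef] at hQmem
    rw [← sub_eq_zero, ← map_sub]
    exact hQmem
  have halg : algebraMap (Polynomial ℂ) (Localization.Away α) α = eval₂ φ T α := by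
    have h0 : algebraMap (Polynomial ℂ) (Localization.Away α) α
        = algebraMap (Polynomial ℂ) (Localization.Away α) (eval₂ C X α) := by rw [eval₂_C_X]
    rw [h0, hom_eval₂]
    congr 1
  have hψβ : AdjoinRoot.mk Q' ((α.comp P).map φ)
      = AdjoinRoot.mk Q' (C (algebraMap (Polynomial ℂ) (Localization.Away α) α)) := by
    rw [Polynomial.map_comp]
    show (AdjoinRoot.mk Q') (eval₂ C (P.map φ) (α.map φ)) = _
    rw [hom_eval₂, hroot, ← hom_eval₂]
    show (AdjoinRoot.mk Q') ((α.map φ).comp (C T)) = _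
    rw [comp_C, eval_map, halg]
  have hD : derivative P ≠ 0 := fun h => by
    have := natDegree_eq_zero_of_derivative_eq_zero h; omega
  obtain ⟨h₁, hh⟩ := aux_dvd_pow (g := α.comp P) hD
    (fun a ha => by rw [eval_comp]; exact hcrit a ha)
  have hunit_a : IsUnit (AdjoinRoot.mk Q'
      (C (algebraMap (Polynomial ℂ) (Localization.Away α) α))) :=
    (IsLocalization.Away.algebraMap_isUnit (S := Localization.Away α) α).map
      ((AdjoinRoot.mk Q').comp (C : Localization.Away α →+* Polynomial (Localization.Away α)))
  have hψD : IsUnit (AdjoinRoot.mk Q' ((derivative P).map φ)) := by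
    have h2 := congrArg (fun p : Polynomial ℂ => AdjoinRoot.mk Q' (p.map φ)) hh
    simp only [Polynomial.map_pow, Polynomial.map_mul, map_pow, map_mul] at h2
    rw [hψβ] at h2
    exact isUnit_of_mul_isUnit_left (h2 ▸ hunit_a.pow (Multiset.card (derivative P).roots))
  have hderiv : IsUnit (AdjoinRoot.mk Q' (derivative Q')) := by
    have hdQ : derivative Q = (derivative P).map φ := by
      rw [hQdef, derivative_sub, derivative_C, sub_zero, derivative_map]
    rw [hQ'def, derivative_C_mul, hdQ, map_mul]
    exact ((c⁻¹.isUnit).map ((AdjoinRoot.mk Q').comp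
      (C : Localization.Away α →+* Polynomial (Localization.Away α)))).mul hψD
  refine ⟨(AdjoinRoot.powerBasis' hmonic).finite, ?_⟩
  constructor
  · exact aux_formallyEtale Q' hderiv
  · exact Algebra.FinitePresentation.quotient ⟨{Q'}, by simp⟩
end
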